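/- Let F be bounded, continuous and integrable on (0,∞), a ∈ ℂ∖{0}, f_k = a^{-k}∫_0^∞ e^{-kp}F(p)dp, and f(z) = Σ_{k≥1} f_k z^k for |z| < |a|. Then f extends analytically to ℂ ∖ (a·[1,∞)), i.e., to the complement of the ray {a·t : t ≥ 1}. -/

import Mathlib

set_option maxHeartbeats 1000000

open MeasureTheory Set

namespace Stmt16Aux

lemma ne_on_ray {a z : ℂ} (hz : ¬ ∃ t : ℝ, 1 ≤ t ∧ z = (t : ℂ) * a) {p : ℝ} (hp : 0 ≤ p) :
    a * Complex.exp (p : ℂ) - z ≠ 0 := by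
  intro h
  rw [sub_eq_zero] at h
  exact hz ⟨Real.exp p, Real.one_le_exp hp, by
    rw [← h, mul_comm]; congr 1; exact (Complex.ofReal_exp p).symm⟩

lemma norm_exp_ofReal (p : ℝ) : ‖Complex.exp (p : ℂ)‖ = Real.exp p := by
  rw [Complex.norm_exp, Complex.ofReal_re]

lemma isOpen_S (a : ℂ) (ha : a ≠ 0) :
    IsOpen {z : ℂ | ¬ ∃ t : ℝ, 1 ≤ t ∧ z = (t : ℂ) * a} := by
  have hset : {z : ℂ | ¬ ∃ t : ℝ, 1 ≤ t ∧ z = (t : ℂ) * a}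
      = ((fun z : ℂ => z * a⁻¹) ⁻¹' {w : ℂ | w.im = 0 ∧ 1 ≤ w.re})ᶜ := by
    ext z
    simp only [Set.mem_setOf_eq, Set.mem_compl_iff, Set.mem_preimage]
    constructor
    · intro hz hw
      apply hz
      refine ⟨(z * a⁻¹).re, hw.2, ?_⟩
      have h1 : (((z * a⁻¹).re : ℝ) : ℂ) = z * a⁻¹ :=
        Complex.ext (by simp) (by simp [hw.1])
      rw [h1]
      field_simp
    · rintro hz ⟨t, ht, rfl⟩
      apply hz
      rw [mul_assoc, mul_inv_cancel₀ ha, mul_one]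
      simp [ht]
  rw [hset]
  exact (((isClosed_eq Complex.continuous_im continuous_const).inter
    (isClosed_le continuous_const Complex.continuous_re)).preimage
    (continuous_id.mul continuous_const)).isOpen_compl

lemma lower_bound {a : ℂ} (ha : a ≠ 0) {z₀ : ℂ}
    (hz₀ : ¬ ∃ t : ℝ, 1 ≤ t ∧ z₀ = (t : ℂ) * a) :
    ∃ ε > 0, ∃ c > 0,
      (∀ z ∈ Metric.closedBall z₀ ε, ¬ ∃ t : ℝ, 1 ≤ t ∧ z = (t : ℂ) * a) ∧
      (∀ z ∈ Metric.closedBall z₀ ε, ∀ p : ℝ, 0 ≤ p →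
        c * Real.exp p ≤ ‖a * Complex.exp (p : ℂ) - z‖) := by
  have ha' : 0 < ‖a‖ := norm_pos_iff.mpr ha
  obtain ⟨ε, εpos, hball⟩ := Metric.isOpen_iff.mp (isOpen_S a ha) z₀ hz₀
  have hsub : Metric.closedBall z₀ (ε/2) ⊆
      {z : ℂ | ¬ ∃ t : ℝ, 1 ≤ t ∧ z = (t : ℂ) * a} :=
    (Metric.closedBall_subset_ball (by linarith)).trans hball
  have hsub' : ∀ z ∈ Metric.closedBall z₀ (ε/2), ¬ ∃ t : ℝ, 1 ≤ t ∧ z = (t : ℂ) * a :=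
    fun z hz => hsub hz
  have hM : 0 < ‖z₀‖ + ε := by positivity
  set P : ℝ := max 0 (Real.log (2 * (‖z₀‖ + ε) / ‖a‖)) with hPdef
  have hP0 : (0:ℝ) ≤ P := le_max_left _ _
  have hPexp : 2 * (‖z₀‖ + ε) / ‖a‖ ≤ Real.exp P := by
    calc 2 * (‖z₀‖ + ε) / ‖a‖ = Real.exp (Real.log (2 * (‖z₀‖ + ε) / ‖a‖)) := by
          rw [Real.exp_log (by positivity)]
      _ ≤ Real.exp P := Real.exp_le_exp.mpr (le_max_right _ _)
  obtain ⟨q₀, hq₀, hmin⟩ := ((isCompact_closedBall z₀ (ε/2)).prod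
      (isCompact_Icc (a := (0:ℝ)) (b := P))).exists_isMinOn
    ⟨(z₀, 0), Set.mk_mem_prod (Metric.mem_closedBall_self (by linarith)) ⟨le_refl 0, hP0⟩⟩
    (((continuous_const.mul (Complex.continuous_exp.comp
      (Complex.continuous_ofReal.comp continuous_snd))).sub continuous_fst).norm).continuousOn
  have hmin' := isMinOn_iff.mp hmin
  have hδpos : 0 < ‖a * Complex.exp ((q₀.2 : ℝ) : ℂ) - q₀.1‖ := by
    rw [norm_pos_iff]
    exact ne_on_ray (hsub' q₀.1 hq₀.1) hq₀.2.1
  set δ : ℝ := ‖a * Complex.exp ((q₀.2 : ℝ) : ℂ) - q₀.1‖ with hδdef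
  refine ⟨ε/2, half_pos εpos, min (δ * Real.exp (-P)) (‖a‖/2),
    lt_min (by positivity) (by positivity), hsub', ?_⟩
  intro z hz p hp
  by_cases hpP : p ≤ P
  · have h3 : δ ≤ ‖a * Complex.exp (p : ℂ) - z‖ :=
      hmin' (z, p) (Set.mk_mem_prod hz ⟨hp, hpP⟩)
    have h2 : δ * Real.exp (-P) * Real.exp p ≤ δ := by
      rw [mul_assoc, ← Real.exp_add]
      have h4 : Real.exp (-P + p) ≤ 1 := Real.exp_le_one_iff.mpr (by linarith)
      nlinarith
    have h1 : min (δ * Real.exp (-P)) (‖a‖/2) * Real.exp p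
        ≤ δ * Real.exp (-P) * Real.exp p := by
      have := Real.exp_pos p
      nlinarith [min_le_left (δ * Real.exp (-P)) (‖a‖/2)]
    linarith
  · push_neg at hpP
    have hzM : ‖z‖ ≤ ‖z₀‖ + ε := by
      have h1 : ‖z - z₀‖ ≤ ε/2 := mem_closedBall_iff_norm.mp hz
      have h2 : ‖z‖ ≤ ‖z₀‖ + ‖z - z₀‖ := by
        calc ‖z‖ = ‖z₀ + (z - z₀)‖ := by ring_nf
          _ ≤ ‖z₀‖ + ‖z - z₀‖ := norm_add_le _ _
      linarith
    have hexp : 2 * (‖z₀‖ + ε) ≤ ‖a‖ * Real.exp p := by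
      have h1 : Real.exp P ≤ Real.exp p := Real.exp_le_exp.mpr hpP.le
      calc 2 * (‖z₀‖ + ε) = 2 * (‖z₀‖ + ε) / ‖a‖ * ‖a‖ :=
            (div_mul_cancel₀ _ (ne_of_gt ha')).symm
        _ ≤ Real.exp p * ‖a‖ := by
            have h2 := hPexp.trans h1
            gcongr
        _ = ‖a‖ * Real.exp p := mul_comm _ _
    have hnorm : ‖a‖ * Real.exp p - ‖z‖ ≤ ‖a * Complex.exp (p : ℂ) - z‖ := by
      have h1 := norm_sub_norm_le (a * Complex.exp (p : ℂ)) z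
      rw [norm_mul, norm_exp_ofReal] at h1
      linarith
    have h4 : min (δ * Real.exp (-P)) (‖a‖/2) * Real.exp p ≤ ‖a‖/2 * Real.exp p := by
      have := Real.exp_pos p
      nlinarith [min_le_right (δ * Real.exp (-P)) (‖a‖/2)]
    nlinarith [Real.exp_pos p]

end Stmt16Aux

open Stmt16Aux

/-- With `f_k = a^{-k} ∫_0^∞ e^{-kp} F(p) dp` (`F` bounded, continuous, integrable on
`(0,∞)`), the sum `f(z) = Σ_{k≥1} f_k z^k`, convergent for `|z| < |a|`, extends analytically
to `ℂ ∖ {a·t : t ≥ 1}`. -/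
theorem stmt16 (F : ℝ → ℂ) (hFc : ContinuousOn F (Ioi 0))
    (hFbd : ∃ C : ℝ, ∀ p ∈ Ioi (0 : ℝ), ‖F p‖ ≤ C)
    (hFint : IntegrableOn F (Ioi 0))
    (a : ℂ) (ha : a ≠ 0) :
    ∃ g : ℂ → ℂ,
      DifferentiableOn ℂ g {z : ℂ | ¬ ∃ t : ℝ, 1 ≤ t ∧ z = (t : ℂ) * a} ∧
      ∀ z : ℂ, ‖z‖ < ‖a‖ →
        g z = ∑' k : ℕ,
          (a ^ (-(k + 1 : ℤ)) * ∫ p in Ioi (0 : ℝ), Complex.exp (-((k : ℂ) + 1) * p) * F p) *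
            z ^ (k + 1) := by
  have ha' : 0 < ‖a‖ := norm_pos_iff.mpr ha
  refine ⟨fun z => ∫ p in Ioi (0:ℝ), F p * (z / (a * Complex.exp (p:ℂ) - z)), ?_, ?_⟩
  · -- Differentiability on the complement of the ray
    intro z₀ hz₀
    obtain ⟨ε, εpos, c, cpos, hsubS, hlow⟩ := lower_bound ha hz₀
    have hmeas : ∀ z ∈ Metric.closedBall z₀ ε,
        AEStronglyMeasurable (fun p : ℝ => F p * (z / (a * Complex.exp (p:ℂ) - z)))
          (volume.restrict (Ioi 0)) := by
      intro z hz
      refine hFint.1.mul ?_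
      refine (ContinuousOn.div continuousOn_const ?_ ?_).aestronglyMeasurable measurableSet_Ioi
      · exact ((continuous_const.mul (Complex.continuous_exp.comp
          Complex.continuous_ofReal)).sub continuous_const).continuousOn
      · intro p hp
        exact ne_on_ray (hsubS z hz) (le_of_lt hp)
    have hc_le : ∀ z ∈ Metric.closedBall z₀ ε, ∀ p : ℝ, 0 < p →
        c ≤ ‖a * Complex.exp (p:ℂ) - z‖ := by
      intro z hz p hp
      have h1 := hlow z hz p hp.le
      nlinarith [Real.one_le_exp hp.le]
    have hint : ∀ z ∈ Metric.closedBall z₀ ε,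
        Integrable (fun p : ℝ => F p * (z / (a * Complex.exp (p:ℂ) - z)))
          (volume.restrict (Ioi 0)) := by
      intro z hz
      refine Integrable.mono (hFint.norm.const_mul (‖z‖ / c)) (hmeas z hz) ?_
      filter_upwards [ae_restrict_mem measurableSet_Ioi] with p hp
      have h2 := hc_le z hz p hp
      rw [norm_mul, norm_div, Real.norm_of_nonneg (by positivity)]
      calc ‖F p‖ * (‖z‖ / ‖a * Complex.exp (p:ℂ) - z‖) ≤ ‖F p‖ * (‖z‖ / c) := by gcongr
        _ = ‖z‖ / c * ‖F p‖ := by ring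
    have hF'meas : AEStronglyMeasurable
        (fun p : ℝ => F p * ((a * Complex.exp (p:ℂ)) / (a * Complex.exp (p:ℂ) - z₀) ^ 2))
        (volume.restrict (Ioi 0)) := by
      refine hFint.1.mul ?_
      refine (ContinuousOn.div ?_ ?_ ?_).aestronglyMeasurable measurableSet_Ioi
      · exact (continuous_const.mul (Complex.continuous_exp.comp
          Complex.continuous_ofReal)).continuousOn
      · exact (((continuous_const.mul (Complex.continuous_exp.comp
          Complex.continuous_ofReal)).sub continuous_const).pow 2).continuousOn
      · intro p hp
        exact pow_ne_zero 2 (ne_on_ray (hsubS z₀ (Metric.mem_closedBall_self εpos.le)) hp.le)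
    have h_bound : ∀ᵐ p ∂(volume.restrict (Ioi (0:ℝ))), ∀ z ∈ Metric.ball z₀ ε,
        ‖F p * ((a * Complex.exp (p:ℂ)) / (a * Complex.exp (p:ℂ) - z) ^ 2)‖
          ≤ (‖a‖ / c ^ 2) * ‖F p‖ := by
      filter_upwards [ae_restrict_mem measurableSet_Ioi] with p hp z hz
      have hzc := Metric.ball_subset_closedBall hz
      have hlb := hlow z hzc p hp.le
      have hd : (0:ℝ) < ‖a * Complex.exp (p:ℂ) - z‖ :=
        lt_of_lt_of_le (by positivity) hlb
      rw [norm_mul, norm_div, norm_mul, norm_exp_ofReal, norm_pow]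
      have h2 : (c * Real.exp p) ^ 2 ≤ ‖a * Complex.exp (p:ℂ) - z‖ ^ 2 :=
        pow_le_pow_left₀ (by positivity) hlb 2
      have h2' : ‖a‖ * (c * Real.exp p) ^ 2 ≤ ‖a‖ * ‖a * Complex.exp (p:ℂ) - z‖ ^ 2 := by
        gcongr
      have h3 : ‖a‖ * Real.exp p / ‖a * Complex.exp (p:ℂ) - z‖ ^ 2 ≤ ‖a‖ / c ^ 2 := by
        rw [div_le_div_iff₀ (by positivity) (by positivity)]
        nlinarith [Real.one_le_exp hp.le, Real.exp_pos p,
          mul_nonneg (mul_nonneg (norm_nonneg a) (sq_nonneg c)) (Real.exp_pos p).le]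
      calc ‖F p‖ * (‖a‖ * Real.exp p / ‖a * Complex.exp (p:ℂ) - z‖ ^ 2)
          ≤ ‖F p‖ * (‖a‖ / c ^ 2) := by gcongr
        _ = ‖a‖ / c ^ 2 * ‖F p‖ := by ring
    have h_diff : ∀ᵐ p ∂(volume.restrict (Ioi (0:ℝ))), ∀ z ∈ Metric.ball z₀ ε,
        HasDerivAt (fun z : ℂ => F p * (z / (a * Complex.exp (p:ℂ) - z)))
          (F p * ((a * Complex.exp (p:ℂ)) / (a * Complex.exp (p:ℂ) - z) ^ 2)) z := by
      filter_upwards [ae_restrict_mem measurableSet_Ioi] with p hp z hz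
      have hne : a * Complex.exp (p:ℂ) - z ≠ 0 :=
        ne_on_ray (hsubS z (Metric.ball_subset_closedBall hz)) hp.le
      have h1 : HasDerivAt (fun z : ℂ => z / (a * Complex.exp (p:ℂ) - z))
          ((1 * (a * Complex.exp (p:ℂ) - z) - z * (0 - 1)) /
            (a * Complex.exp (p:ℂ) - z) ^ 2) z :=
        (hasDerivAt_id z).div ((hasDerivAt_const z _).sub (hasDerivAt_id z)) hne
      have h2 := h1.const_mul (F p)
      have h4 : F p * ((a * Complex.exp (p:ℂ)) / (a * Complex.exp (p:ℂ) - z) ^ 2)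
          = F p * ((1 * (a * Complex.exp (p:ℂ) - z) - z * (0 - 1)) /
            (a * Complex.exp (p:ℂ) - z) ^ 2) := by ring
      rw [h4]
      exact h2
    have key := hasDerivAt_integral_of_dominated_loc_of_deriv_le
      (μ := volume.restrict (Ioi (0:ℝ)))
      (F := fun z p => F p * (z / (a * Complex.exp (p:ℂ) - z)))
      (F' := fun z p => F p * ((a * Complex.exp (p:ℂ)) / (a * Complex.exp (p:ℂ) - z) ^ 2))
      (bound := fun p => (‖a‖ / c ^ 2) * ‖F p‖) (x₀ := z₀) (Metric.ball_mem_nhds z₀ εpos)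
      (Filter.eventually_of_mem (Metric.ball_mem_nhds z₀ εpos)
        (fun z hz => hmeas z (Metric.ball_subset_closedBall hz)))
      (hint z₀ (Metric.mem_closedBall_self εpos.le)) hF'meas h_bound
      (hFint.norm.const_mul (‖a‖ / c ^ 2)) h_diff
    exact key.2.differentiableAt.differentiableWithinAt
  · -- the power series identity for ‖z‖ < ‖a‖
    intro z hz
    have hr0 : (0:ℝ) ≤ ‖z‖ / ‖a‖ := by positivity
    have hr1 : ‖z‖ / ‖a‖ < 1 := (div_lt_one ha').mpr hz
    have hwlt : ∀ p : ℝ, 0 < p → ‖z / (a * Complex.exp (p:ℂ))‖ ≤ ‖z‖ / ‖a‖ := by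
      intro p hp
      rw [norm_div, norm_mul, norm_exp_ofReal]
      rw [div_le_div_iff₀ (by positivity) ha']
      nlinarith [Real.one_le_exp hp.le, mul_nonneg (norm_nonneg z) ha'.le]
    have hne : ∀ p : ℝ, 0 < p → a * Complex.exp (p:ℂ) - z ≠ 0 := by
      intro p hp h
      rw [sub_eq_zero] at h
      have h2 : ‖a‖ ≤ ‖z‖ := by
        rw [← h, norm_mul, norm_exp_ofReal]
        nlinarith [Real.one_le_exp hp.le]
      linarith
    have haep : ∀ p : ℝ, a * Complex.exp (p:ℂ) ≠ 0 :=
      fun p => mul_ne_zero ha (Complex.exp_ne_zero _)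
    have hpt : ∀ p ∈ Ioi (0:ℝ),
        F p * (z / (a * Complex.exp (p:ℂ) - z))
          = ∑' k : ℕ, (z / (a * Complex.exp (p:ℂ))) ^ (k + 1) * F p := by
      intro p hp
      set w : ℂ := z / (a * Complex.exp (p:ℂ)) with hwdef
      have hw : ‖w‖ < 1 := lt_of_le_of_lt (hwlt p hp) hr1
      have h1w : (1:ℂ) - w ≠ 0 := by
        intro h
        rw [sub_eq_zero] at h
        rw [← h] at hw
        simp at hw
      have hsum : ∑' k : ℕ, w ^ (k + 1) * F p = ((1 - w)⁻¹ * w) * F p := by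
        rw [tsum_mul_right]
        congr 1
        calc ∑' k : ℕ, w ^ (k + 1) = ∑' k : ℕ, w ^ k * w :=
              tsum_congr fun k => by rw [pow_succ]
          _ = (∑' k : ℕ, w ^ k) * w := tsum_mul_right
          _ = (1 - w)⁻¹ * w := by rw [tsum_geometric_of_norm_lt_one hw]
      rw [hsum, hwdef]
      have h2 := hne p hp
      have h3 := haep p
      field_simp
    have hcontw : ∀ k : ℕ, Continuous fun p : ℝ => (z / (a * Complex.exp (p:ℂ))) ^ (k + 1) :=
      fun k => (continuous_const.div (continuous_const.mul
        (Complex.continuous_exp.comp Complex.continuous_ofReal)) haep).pow _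
    have hintk : ∀ k : ℕ,
        Integrable (fun p : ℝ => (z / (a * Complex.exp (p:ℂ))) ^ (k + 1) * F p)
          (volume.restrict (Ioi 0)) := by
      intro k
      refine Integrable.mono (hFint.norm.const_mul ((‖z‖ / ‖a‖) ^ (k + 1)))
        (((hcontw k).aestronglyMeasurable).mul hFint.1) ?_
      filter_upwards [ae_restrict_mem measurableSet_Ioi] with p hp
      rw [norm_mul, norm_pow, Real.norm_of_nonneg (by positivity)]
      have h1 : ‖z / (a * Complex.exp (p:ℂ))‖ ^ (k+1) ≤ (‖z‖ / ‖a‖) ^ (k+1) :=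
        pow_le_pow_left₀ (norm_nonneg _) (hwlt p hp) _
      nlinarith [norm_nonneg (F p), pow_nonneg (norm_nonneg (z / (a * Complex.exp (p:ℂ)))) (k+1)]
    have hsummable : Summable fun k : ℕ =>
        ∫ p in Ioi (0:ℝ), ‖(z / (a * Complex.exp (p:ℂ))) ^ (k + 1) * F p‖ := by
      have hb : Summable fun k : ℕ =>
          (‖z‖ / ‖a‖) ^ k * ((‖z‖ / ‖a‖) * ∫ p in Ioi (0:ℝ), ‖F p‖) :=
        (summable_geometric_of_lt_one hr0 hr1).mul_right _
      refine Summable.of_nonneg_of_le (fun k => ?_) (fun k => ?_) hb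
      · exact integral_nonneg fun p => norm_nonneg _
      · have h1 : ∫ p in Ioi (0:ℝ), ‖(z / (a * Complex.exp (p:ℂ))) ^ (k + 1) * F p‖
            ≤ ∫ p in Ioi (0:ℝ), (‖z‖ / ‖a‖) ^ (k + 1) * ‖F p‖ := by
          refine integral_mono_ae (hintk k).norm (hFint.norm.const_mul _) ?_
          filter_upwards [ae_restrict_mem measurableSet_Ioi] with p hp
          rw [norm_mul, norm_pow]
          have h2 : ‖z / (a * Complex.exp (p:ℂ))‖ ^ (k+1) ≤ (‖z‖ / ‖a‖) ^ (k+1) :=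
            pow_le_pow_left₀ (norm_nonneg _) (hwlt p hp) _
          nlinarith [norm_nonneg (F p),
            pow_nonneg (norm_nonneg (z / (a * Complex.exp (p:ℂ)))) (k+1)]
        rw [integral_const_mul] at h1
        calc (∫ p in Ioi (0:ℝ), ‖(z / (a * Complex.exp (p:ℂ))) ^ (k + 1) * F p‖)
            ≤ (‖z‖ / ‖a‖) ^ (k + 1) * ∫ p in Ioi (0:ℝ), ‖F p‖ := h1
          _ = (‖z‖ / ‖a‖) ^ k * ((‖z‖ / ‖a‖) * ∫ p in Ioi (0:ℝ), ‖F p‖) := by ring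
    have hswap : (∫ p in Ioi (0:ℝ), F p * (z / (a * Complex.exp (p:ℂ) - z)))
        = ∑' k : ℕ, ∫ p in Ioi (0:ℝ), (z / (a * Complex.exp (p:ℂ))) ^ (k + 1) * F p := by
      rw [setIntegral_congr_fun measurableSet_Ioi hpt]
      exact (integral_tsum_of_summable_integral_norm hintk hsummable).symm
    show (∫ p in Ioi (0:ℝ), F p * (z / (a * Complex.exp (p:ℂ) - z))) = _
    rw [hswap]
    refine tsum_congr fun k => ?_
    have hterm : ∀ p : ℝ, (z / (a * Complex.exp (p:ℂ))) ^ (k + 1) * F p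
        = (a ^ (-(k + 1 : ℤ)) * z ^ (k + 1)) * (Complex.exp (-((k : ℂ) + 1) * p) * F p) := by
      intro p
      have he : Complex.exp (-((k : ℂ) + 1) * p) = (Complex.exp (p:ℂ) ^ (k + 1))⁻¹ := by
        rw [neg_mul, Complex.exp_neg]
        congr 1
        rw [← Complex.exp_nat_mul]
        congr 1
        push_cast
        ring
      have hzp : a ^ (-(k + 1 : ℤ)) = (a ^ (k + 1))⁻¹ := by
        have h1 : (-(k + 1 : ℤ)) = -((k + 1 : ℕ) : ℤ) := by push_cast; ring
        rw [h1, zpow_neg, zpow_natCast]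
      rw [he, hzp, div_pow, mul_pow, div_eq_mul_inv, mul_inv]
      ring
    calc (∫ p in Ioi (0:ℝ), (z / (a * Complex.exp (p:ℂ))) ^ (k + 1) * F p)
        = ∫ p in Ioi (0:ℝ), (a ^ (-(k + 1 : ℤ)) * z ^ (k + 1)) *
            (Complex.exp (-((k : ℂ) + 1) * p) * F p) :=
          setIntegral_congr_fun measurableSet_Ioi (fun p _ => hterm p)
      _ = (a ^ (-(k + 1 : ℤ)) * z ^ (k + 1)) *
            ∫ p in Ioi (0:ℝ), Complex.exp (-((k : ℂ) + 1) * p) * F p :=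
          integral_const_mul _ _
      _ = (a ^ (-(k + 1 : ℤ)) *
            ∫ p in Ioi (0:ℝ), Complex.exp (-((k : ℂ) + 1) * p) * F p) * z ^ (k + 1) := by ring
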